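/- arXiv:2311.07208 — 2 statements merged into one kernel-verified Lean document; each statement's English description precedes it below -/
import Mathlib

section
/- Let (X,T) be a Polish dynamical system and K ⊂ Per(T). If K is linkable, then the set {μ_x : x ∈ K} is dense in its closed convex hull inside the space of T-invariant measures with the weak* topology. -/
open MeasureTheory Filter Topology
open scoped ENNReal NNReal

section Defs

variable {X : Type*} [MetricSpace X] [MeasurableSpace X] [BorelSpace X]

/-- Kantorovich–Rubinshtein (dual-Lipschitz) distance between two measures:
the supremum of `|∫ f dμ - ∫ f dν|` over bounded `f` with Lipschitz constant at most `1`. -/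
noncomputable def krDist (μ ν : Measure X) : ℝ :=
  sSup { r : ℝ | ∃ f : X → ℝ, LipschitzWith 1 f ∧ (∃ C, ∀ x, |f x| ≤ C) ∧
    r = |∫ x, f x ∂μ - ∫ x, f x ∂ν| }

/-- Empirical measure of the first `n` terms of a sequence (as a plain measure). -/
noncomputable def empMeas (x : ℕ → X) (n : ℕ) : Measure X :=
  (n : ℝ≥0∞)⁻¹ • ∑ i ∈ Finset.range n, Measure.dirac (x i)

/-- Average of the Dirac measures at the first `max n 1` points of a sequence, as a
probability measure.  For `n ≥ 1` this is the `n`-th empirical measure. -/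
noncomputable def avgDirac (x : ℕ → X) (n : ℕ) : ProbabilityMeasure X :=
  ⟨((max n 1 : ℕ) : ℝ≥0∞)⁻¹ • ∑ i ∈ Finset.range (max n 1), Measure.dirac (x i), by
    constructor
    have h : (∑ i ∈ Finset.range (max n 1), Measure.dirac (x i)) Set.univ
        = ((max n 1 : ℕ) : ℝ≥0∞) := by
      simp [Measure.finset_sum_apply]
    rw [Measure.smul_apply, h, smul_eq_mul]
    exact ENNReal.inv_mul_cancel (by simp) (by simp)⟩

/-- The set of weak* limit points of the empirical measures of a sequence. -/
def limitMeasures (x : ℕ → X) : Set (ProbabilityMeasure X) :=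
  { μ | ∃ φ : ℕ → ℕ, StrictMono φ ∧ Tendsto (fun k => avgDirac x (φ k)) atTop (𝓝 μ) }

/-- `x` is a generic point for `μ`: the empirical measures along the orbit of `x`
converge to `μ` in the weak* topology. -/
def genericFor (T : X → X) (x : X) (μ : ProbabilityMeasure X) : Prop :=
  Tendsto (fun n => avgDirac (fun i => T^[i] x) n) atTop (𝓝 μ)

/-- The invariant measure supported on the periodic orbit of `x` of period `p`. -/
noncomputable def periodicOrbitMeasure (T : X → X) (x : X) (p : ℕ) : ProbabilityMeasure X :=
  avgDirac (fun i => T^[i] x) p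

/-- The set of invariant measures supported on periodic orbits of points of `K`. -/
def perMeasures (T : X → X) (K : Set X) : Set (ProbabilityMeasure X) :=
  { μ | ∃ x ∈ K, ∃ p, 0 < p ∧ T^[p] x = x ∧ μ = periodicOrbitMeasure T x p }

/-- The mean orbital pseudo-metric `Ē`. -/
noncomputable def meanOrbitalDist (T : X → X) (x y : X) : ℝ :=
  limsup (fun n => ⨅ σ : Equiv.Perm (Fin n),
    (∑ i : Fin n, dist (T^[(i : ℕ)] x) (T^[((σ i : Fin n) : ℕ)] y)) / n) atTop

/-- `x` is an asymptotic average pseudo-orbit for `T`. -/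
def IsAAPO (T : X → X) (x : ℕ → X) : Prop :=
  Tendsto (fun n => (∑ i ∈ Finset.range n, dist (T (x i)) (x (i + 1))) / n) atTop (𝓝 0)

/-- The point `x` is `K`-closable. -/
def ClosableAt (T : X → X) (K : Set X) (x : X) : Prop :=
  ∀ ε > (0 : ℝ), ∀ N : ℕ, ∃ p q : ℕ, 0 < p ∧ N ≤ p ∧ p ≤ q ∧ (q : ℝ) ≤ (1 + ε) * p ∧
    ∃ y ∈ K, T^[q] y = y ∧ ∀ i < p, dist (T^[i] y) (T^[i] x) < ε

/-- The set `K ⊆ Per(T)` is linkable. -/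
def Linkable (T : X → X) (K : Set X) : Prop :=
  ∀ y₁ ∈ K, ∀ y₂ ∈ K, ∀ ε > (0 : ℝ), ∀ lam ∈ Set.Icc (0 : ℝ) 1,
    ∃ p₁ p₂ q₁ q₂ : ℕ, 0 < p₁ ∧ 0 < p₂ ∧ T^[p₁] y₁ = y₁ ∧ T^[p₂] y₂ = y₂ ∧
      ∃ z ∈ K, T^[q₂] z = z ∧
        lam - ε ≤ (p₁ : ℝ) / (p₁ + p₂) ∧ (p₁ : ℝ) / (p₁ + p₂) ≤ lam + ε ∧
        p₁ ≤ q₁ ∧ (q₁ : ℝ) ≤ (1 + ε) * p₁ ∧ (∀ i < p₁, dist (T^[i] z) (T^[i] y₁) < ε) ∧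
        p₂ ≤ q₂ - q₁ ∧ ((q₂ - q₁ : ℕ) : ℝ) ≤ (1 + ε) * p₂ ∧
        (∀ i < p₂, dist (T^[i + q₁] z) (T^[i] y₂) < ε)

/-- `(X,T)` has the asymptotic orbital average shadowing property. -/
def AOASP (T : X → X) : Prop :=
  ∀ x : ℕ → X, IsAAPO T x → ∃ z : X,
    Tendsto (fun n => ⨅ σ : Equiv.Perm (Fin n),
      (∑ i : Fin n, dist (x (i : ℕ)) (T^[((σ i : Fin n) : ℕ)] z)) / n) atTop (𝓝 0)

end Defs

open BoundedContinuousFunction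

section Helpers
variable {X : Type*} [MetricSpace X] [MeasurableSpace X] [BorelSpace X]


lemma sum_mul_period (T : X → X) (g : X → ℝ) (y : X) {a : ℕ}
    (hya : T^[a] y = y) (k : ℕ) :
    ∑ i ∈ Finset.range (k * a), g (T^[i] y) = k * ∑ i ∈ Finset.range a, g (T^[i] y) := by
  induction k with
  | zero => simp
  | succ k ih =>
    have hk : T^[k * a] y = y := (Function.IsPeriodicPt.const_mul hya k : _)
    rw [Nat.succ_mul, Finset.sum_range_add, ih]
    have : ∀ i, g (T^[k * a + i] y) = g (T^[i] y) := by
      intro i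
      rw [add_comm, Function.iterate_add_apply, hk]
    simp only [this]
    push_cast; ring

lemma avg_period_eq (T : X → X) (g : X → ℝ) (y : X) {a b : ℕ} (ha : 0 < a) (hb : 0 < b)
    (hya : T^[a] y = y) (hyb : T^[b] y = y) :
    (∑ i ∈ Finset.range a, g (T^[i] y)) / a = (∑ i ∈ Finset.range b, g (T^[i] y)) / b := by
  have h1 := sum_mul_period T g y hya b
  have h2 := sum_mul_period T g y hyb a
  have hba : b * a = a * b := mul_comm b a
  rw [hba] at h1
  have ha' : (0:ℝ) < a := by exact_mod_cast ha
  have hb' : (0:ℝ) < b := by exact_mod_cast hb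
  have : (b : ℝ) * ∑ i ∈ Finset.range a, g (T^[i] y) = (a:ℝ) * ∑ i ∈ Finset.range b, g (T^[i] y) := by
    rw [← h1, h2]
  field_simp
  linarith [this]


lemma integral_periodicOrbitMeasure (T : X → X) (y : X) {p : ℕ} (hp : 0 < p) (f : X →ᵇ ℝ) :
    ∫ w, f w ∂((periodicOrbitMeasure T y p : ProbabilityMeasure X) : Measure X)
      = (∑ i ∈ Finset.range p, f (T^[i] y)) / p := by
  have hmax : max p 1 = p := max_eq_left hp
  have : ((periodicOrbitMeasure T y p : ProbabilityMeasure X) : Measure X)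
      = ((max p 1 : ℕ) : ℝ≥0∞)⁻¹ • (∑ i ∈ Finset.range (max p 1), Measure.dirac (T^[i] y)) := rfl
  rw [this, hmax, integral_smul_measure, integral_finset_sum_measure (fun i _ => f.integrable _)]
  simp [integral_dirac, ENNReal.toReal_inv, div_eq_inv_mul]

lemma integral_combo (a b : ℝ≥0) (μ ν : FiniteMeasure X) (f : X →ᵇ ℝ) :
    ∫ w, f w ∂((a • μ + b • ν : FiniteMeasure X) : Measure X)
      = (a : ℝ) * ∫ w, f w ∂(μ : Measure X) + (b : ℝ) * ∫ w, f w ∂(ν : Measure X) := by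
  rw [FiniteMeasure.toMeasure_add, FiniteMeasure.toMeasure_smul, FiniteMeasure.toMeasure_smul,
    integral_add_measure (f.integrable _) (f.integrable _),
    integral_smul_nnreal_measure, integral_smul_nnreal_measure]
  simp [NNReal.smul_def]

lemma combo_continuous (a b : ℝ≥0) :
    Continuous (fun p : FiniteMeasure X × FiniteMeasure X => a • p.1 + b • p.2) := by
  rw [continuous_iff_continuousAt]
  intro p
  apply continuousAt_of_tendsto_nhds (y := a • p.1 + b • p.2)
  rw [FiniteMeasure.tendsto_iff_forall_integral_tendsto]
  intro f
  simp only [integral_combo]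
  have hc := FiniteMeasure.continuous_integral_boundedContinuousFunction (X := X) f
  exact ((continuous_const.mul (hc.comp continuous_fst)).add
    (continuous_const.mul (hc.comp continuous_snd))).tendsto p

lemma exists_delta (f : X →ᵇ ℝ) (F : Finset X) (hF : F.Nonempty) {η : ℝ} (hη : 0 < η) :
    ∃ δ > 0, ∀ w ∈ F, ∀ x, dist x w < δ → |f x - f w| ≤ η := by
  have h : ∀ w : X, ∃ δ > 0, ∀ x, dist x w < δ → |f x - f w| ≤ η := by
    intro w
    obtain ⟨δ, hδpos, hδ⟩ := Metric.continuous_iff.mp f.continuous w η hη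
    exact ⟨δ, hδpos, fun x hx => by
      have := hδ x hx
      rw [Real.dist_eq] at this
      exact this.le⟩
  choose δf hδpos hδ using h
  refine ⟨F.inf' hF δf, ?_, ?_⟩
  · exact (Finset.lt_inf'_iff hF).mpr fun w _ => hδpos w
  · intro w hw x hx
    exact hδ w x (lt_of_lt_of_le hx (Finset.inf'_le _ hw))

lemma ratio_est {p₁ p₂ q₂ ε lam : ℝ} (hp₁ : 0 ≤ p₁) (hp₂ : 0 ≤ p₂) (hpos : 0 < p₁ + p₂)
    (hq : p₁ + p₂ ≤ q₂) (hq' : q₂ ≤ (1 + ε) * (p₁ + p₂)) (hε : 0 ≤ ε)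
    (hl : lam - ε ≤ p₁ / (p₁ + p₂)) (hl' : p₁ / (p₁ + p₂) ≤ lam + ε) :
    |p₁ / q₂ - lam| ≤ 2 * ε := by
  have hq₂ : (0:ℝ) < q₂ := lt_of_lt_of_le hpos hq
  set d := p₁ + p₂ with hd
  have h1 : p₁ / q₂ ≤ p₁ / d := div_le_div_of_nonneg_left hp₁ hpos hq
  have h2 : p₁ / d - p₁ / q₂ ≤ ε := by
    have heq : p₁ / d - p₁ / q₂ = p₁ * (q₂ - d) / (d * q₂) := by
      field_simp
    rw [heq]
    rw [div_le_iff₀ (by positivity)]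
    have h3 : q₂ - d ≤ ε * d := by linarith
    have h4 : p₁ ≤ q₂ := by linarith
    nlinarith
  rw [abs_le]
  constructor <;> nlinarith [h1, h2, hl, hl']

end Helpers

section Main
variable {X : Type*} [MetricSpace X] [MeasurableSpace X] [BorelSpace X]

lemma iterate_mod_period (T : X → X) (y : X) {m : ℕ} (hy : T^[m] y = y) (i : ℕ) :
    T^[i] y = T^[i % m] y := by
  have hz : T^[m * (i / m)] y = y := (Function.IsPeriodicPt.mul_const hy (i / m) : _)
  conv_lhs => rw [← Nat.mod_add_div i m, Function.iterate_add_apply, hz]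

set_option maxHeartbeats 1000000 in
lemma combo_mem_closure (T : X → X) (K : Set X) (hlink : Linkable T K)
    {μp νp : ProbabilityMeasure X} (hμ : μp ∈ perMeasures T K) (hν : νp ∈ perMeasures T K)
    (a b : ℝ≥0) (hab : a + b = 1) :
    a • μp.toFiniteMeasure + b • νp.toFiniteMeasure
      ∈ closure (ProbabilityMeasure.toFiniteMeasure '' perMeasures T K) := by
  classical
  obtain ⟨y₁, hy₁K, m₁, hm₁, hym₁, rfl⟩ := hμ
  obtain ⟨y₂, hy₂K, m₂, hm₂, hym₂, rfl⟩ := hν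
  set lam : ℝ := (a : ℝ) with hlamdef
  have hab' : (a : ℝ) + (b : ℝ) = 1 := by exact_mod_cast congrArg NNReal.toReal hab
  have hlam0 : 0 ≤ lam := a.coe_nonneg
  have hlam1 : lam ≤ 1 := by linarith [NNReal.coe_nonneg b]
  have hbval : (b : ℝ) = 1 - lam := by linarith
  have hmain := fun n : ℕ => hlink y₁ hy₁K y₂ hy₂K (1 / ((n : ℝ) + 1)) (by positivity)
    lam ⟨hlam0, hlam1⟩
  choose p₁ p₂ q₁ q₂ hp₁ hp₂ hper₁ hper₂ z hzK hzper hlow hhigh hq₁le hq₁ub hsh₁ hq₂le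
    hq₂ub hsh₂ using hmain
  have hq₂pos : ∀ n, 0 < q₂ n := fun n => by have h1 := hq₂le n; have h2 := hp₂ n; omega
  have hq₁q₂ : ∀ n, q₁ n ≤ q₂ n := fun n => by have h1 := hq₂le n; have h2 := hp₂ n; omega
  have hp₁p₂q₂ : ∀ n, q₁ n + p₂ n ≤ q₂ n := fun n => by
    have h1 := hq₂le n; have h2 := hp₂ n; omega
  have hmem : ∀ n, (periodicOrbitMeasure T (z n) (q₂ n)).toFiniteMeasure
      ∈ ProbabilityMeasure.toFiniteMeasure '' perMeasures T K :=
    fun n => ⟨_, ⟨z n, hzK n, q₂ n, hq₂pos n, hzper n, rfl⟩, rfl⟩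
  refine mem_closure_of_tendsto (b := atTop)
    (f := fun n => (periodicOrbitMeasure T (z n) (q₂ n)).toFiniteMeasure)
    ?_ (Eventually.of_forall hmem)
  rw [FiniteMeasure.tendsto_iff_forall_integral_tendsto]
  intro f
  set M : ℝ := ‖f‖ with hMdef
  have hM : 0 ≤ M := norm_nonneg f
  have hfM : ∀ x : X, |f x| ≤ M := fun x => by
    simpa [Real.norm_eq_abs] using f.norm_coe_le_norm x
  set I₁ : ℝ := (∑ i ∈ Finset.range m₁, f (T^[i] y₁)) / m₁ with hI₁def
  set I₂ : ℝ := (∑ i ∈ Finset.range m₂, f (T^[i] y₂)) / m₂ with hI₂def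
  have hI₁M : |I₁| ≤ M := by
    rw [hI₁def, abs_div, Nat.abs_cast, div_le_iff₀ (by exact_mod_cast hm₁)]
    calc |∑ i ∈ Finset.range m₁, f (T^[i] y₁)| ≤ ∑ i ∈ Finset.range m₁, |f (T^[i] y₁)| :=
          Finset.abs_sum_le_sum_abs _ _
      _ ≤ ∑ _i ∈ Finset.range m₁, M := Finset.sum_le_sum fun i _ => hfM _
      _ = m₁ * M := by simp [mul_comm]
      _ = M * m₁ := by ring
  have hI₂M : |I₂| ≤ M := by
    rw [hI₂def, abs_div, Nat.abs_cast, div_le_iff₀ (by exact_mod_cast hm₂)]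
    calc |∑ i ∈ Finset.range m₂, f (T^[i] y₂)| ≤ ∑ i ∈ Finset.range m₂, |f (T^[i] y₂)| :=
          Finset.abs_sum_le_sum_abs _ _
      _ ≤ ∑ _i ∈ Finset.range m₂, M := Finset.sum_le_sum fun i _ => hfM _
      _ = m₂ * M := by simp [mul_comm]
      _ = M * m₂ := by ring
  have hlimval : ∫ w, f w
      ∂((a • (periodicOrbitMeasure T y₁ m₁).toFiniteMeasure
          + b • (periodicOrbitMeasure T y₂ m₂).toFiniteMeasure : FiniteMeasure X) : Measure X)
      = lam * I₁ + (1 - lam) * I₂ := by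
    rw [integral_combo, hbval]
    congr 1
    · rw [ProbabilityMeasure.toMeasure_comp_toFiniteMeasure_eq_toMeasure,
        integral_periodicOrbitMeasure T y₁ hm₁ f]
    · rw [ProbabilityMeasure.toMeasure_comp_toFiniteMeasure_eq_toMeasure,
        integral_periodicOrbitMeasure T y₂ hm₂ f]
  rw [hlimval]
  have hval : ∀ n, ∫ w, f w
      ∂(((periodicOrbitMeasure T (z n) (q₂ n)).toFiniteMeasure : FiniteMeasure X) : Measure X)
      = (∑ i ∈ Finset.range (q₂ n), f (T^[i] (z n))) / (q₂ n) := fun n => by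
    rw [ProbabilityMeasure.toMeasure_comp_toFiniteMeasure_eq_toMeasure,
      integral_periodicOrbitMeasure T (z n) (hq₂pos n) f]
  simp only [hval]
  rw [Metric.tendsto_atTop]
  intro η hη
  -- finite orbit set and modulus of continuity
  set Fs : Finset X := ((Finset.range m₁).image fun i => T^[i] y₁)
      ∪ ((Finset.range m₂).image fun i => T^[i] y₂) with hFsdef
  have hFne : Fs.Nonempty :=
    ⟨T^[0] y₁, Finset.mem_union_left _ (Finset.mem_image_of_mem _ (Finset.mem_range.mpr hm₁))⟩
  obtain ⟨δ, hδpos, hδ⟩ := exists_delta f Fs hFne (by positivity : (0:ℝ) < η / 4)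
  obtain ⟨N, hN⟩ := exists_nat_one_div_lt (lt_min hδpos
    (by positivity : (0:ℝ) < η / (2 * (6 * M + 1))))
  refine ⟨N, fun n hn => ?_⟩
  set ε : ℝ := 1 / ((n : ℝ) + 1) with hεdef
  have hεpos : 0 < ε := by positivity
  have hεN : ε ≤ 1 / ((N : ℝ) + 1) := by
    apply one_div_le_one_div_of_le (by positivity)
    exact_mod_cast Nat.succ_le_succ hn
  have hεδ : ε < δ := lt_of_le_of_lt hεN (lt_of_lt_of_le hN (min_le_left _ _))
  have hεη : ε < η / (2 * (6 * M + 1)) :=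
    lt_of_le_of_lt hεN (lt_of_lt_of_le hN (min_le_right _ _))
  -- real casts for this n
  have hp₁R : (0:ℝ) < p₁ n := by exact_mod_cast hp₁ n
  have hp₂R : (0:ℝ) < p₂ n := by exact_mod_cast hp₂ n
  have hq₂R : (0:ℝ) < q₂ n := by exact_mod_cast hq₂pos n
  have hq₁R : (p₁ n : ℝ) ≤ q₁ n := by exact_mod_cast hq₁le n
  have hcastsub : ((q₂ n - q₁ n : ℕ) : ℝ) = (q₂ n : ℝ) - q₁ n := by
    exact_mod_cast Nat.cast_sub (hq₁q₂ n)
  have hq₂ub' : (q₂ n : ℝ) - q₁ n ≤ (1 + ε) * p₂ n := by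
    rw [← hcastsub]; exact hq₂ub n
  have hq₁ub' : (q₁ n : ℝ) ≤ (1 + ε) * p₁ n := hq₁ub n
  have hp₁q₂ : (p₁ n : ℝ) ≤ q₂ n := by
    have := hp₁p₂q₂ n
    have : (q₁ n : ℝ) + p₂ n ≤ q₂ n := by exact_mod_cast this
    linarith
  have hp₂q₂ : (p₂ n : ℝ) ≤ q₂ n := by
    have : (q₁ n : ℝ) + p₂ n ≤ q₂ n := by exact_mod_cast hp₁p₂q₂ n
    have h0 : (0:ℝ) ≤ q₁ n := Nat.cast_nonneg _
    linarith
  have hsumq₂ : (p₁ n : ℝ) + p₂ n ≤ q₂ n := by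
    have : (q₁ n : ℝ) + p₂ n ≤ q₂ n := by exact_mod_cast hp₁p₂q₂ n
    linarith
  have hq₂ub2 : (q₂ n : ℝ) ≤ (1 + ε) * ((p₁ n : ℝ) + p₂ n) := by
    have hring : (1 + ε) * ((p₁ n : ℝ) + p₂ n) = (1 + ε) * p₁ n + (1 + ε) * p₂ n := by ring
    linarith [hq₂ub', hq₁ub']
  -- ratio estimates
  have hr₁ : |(p₁ n : ℝ) / q₂ n - lam| ≤ 2 * ε :=
    ratio_est hp₁R.le hp₂R.le (by linarith) hsumq₂ hq₂ub2 hεpos.le (hlow n) (hhigh n)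
  have hr₂ : |(p₂ n : ℝ) / q₂ n - (1 - lam)| ≤ 2 * ε := by
    have hne : ((p₁ n : ℝ) + p₂ n) ≠ 0 := by positivity
    have hswap : ((p₂ n : ℝ)) / ((p₂ n : ℝ) + p₁ n) = 1 - (p₁ n : ℝ) / ((p₁ n : ℝ) + p₂ n) := by
      rw [add_comm ((p₂ n : ℝ)) ((p₁ n : ℝ)), eq_sub_iff_add_eq, ← add_div,
        add_comm ((p₂ n : ℝ)) ((p₁ n : ℝ)), div_self hne]
    have hq₂ub2' : (q₂ n : ℝ) ≤ (1 + ε) * ((p₂ n : ℝ) + p₁ n) := by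
      rw [add_comm ((p₂ n : ℝ)) ((p₁ n : ℝ))]; exact hq₂ub2
    refine ratio_est hp₂R.le hp₁R.le (by linarith) (by linarith) hq₂ub2' hεpos.le ?_ ?_
    · rw [hswap]; have := hhigh n; linarith
    · rw [hswap]; have := hlow n; linarith
  -- membership of orbit points in Fs
  have hmem₁ : ∀ i : ℕ, T^[i] y₁ ∈ Fs := fun i => by
    rw [iterate_mod_period T y₁ hym₁ i]
    exact Finset.mem_union_left _ (Finset.mem_image_of_mem _
      (Finset.mem_range.mpr (Nat.mod_lt _ hm₁)))
  have hmem₂ : ∀ i : ℕ, T^[i] y₂ ∈ Fs := fun i => by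
    rw [iterate_mod_period T y₂ hym₂ i]
    exact Finset.mem_union_right _ (Finset.mem_image_of_mem _
      (Finset.mem_range.mpr (Nat.mod_lt _ hm₂)))
  -- the four pieces
  set g : ℕ → ℝ := fun i => f (T^[i] (z n)) with hgdef
  set S₁ : ℝ := ∑ i ∈ Finset.range (p₁ n), g i with hS₁def
  set G₁ : ℝ := ∑ i ∈ Finset.Ico (p₁ n) (q₁ n), g i with hG₁def
  set S₂ : ℝ := ∑ i ∈ Finset.Ico (q₁ n) (q₁ n + p₂ n), g i with hS₂def
  set G₂ : ℝ := ∑ i ∈ Finset.Ico (q₁ n + p₂ n) (q₂ n), g i with hG₂def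
  set A₁ : ℝ := ∑ i ∈ Finset.range (p₁ n), f (T^[i] y₁) with hA₁def
  set A₂ : ℝ := ∑ i ∈ Finset.range (p₂ n), f (T^[i] y₂) with hA₂def
  have hsplit : ∑ i ∈ Finset.range (q₂ n), g i = S₁ + G₁ + S₂ + G₂ := by
    rw [hS₁def, hG₁def, hS₂def, hG₂def, Finset.range_eq_Ico,
      ← Finset.sum_Ico_consecutive g (Nat.zero_le (q₁ n + p₂ n)) (hp₁p₂q₂ n),
      ← Finset.sum_Ico_consecutive g (Nat.zero_le (q₁ n)) (Nat.le_add_right _ _),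
      ← Finset.sum_Ico_consecutive g (Nat.zero_le (p₁ n)) (hq₁le n), ← Finset.range_eq_Ico]
  -- average identities
  have hA₁avg : A₁ = (p₁ n : ℝ) * I₁ := by
    have := avg_period_eq T (fun x => f x) y₁ (hp₁ n) hm₁ (hper₁ n) hym₁
    rw [hA₁def, hI₁def]
    field_simp at this ⊢
    linarith [this]
  have hA₂avg : A₂ = (p₂ n : ℝ) * I₂ := by
    have := avg_period_eq T (fun x => f x) y₂ (hp₂ n) hm₂ (hper₂ n) hym₂
    rw [hA₂def, hI₂def]
    field_simp at this ⊢
    linarith [this]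
  -- shadowing estimates
  have hB₁ : |S₁ - A₁| ≤ (p₁ n : ℝ) * (η / 4) := by
    rw [hS₁def, hA₁def, ← Finset.sum_sub_distrib]
    calc |∑ i ∈ Finset.range (p₁ n), (g i - f (T^[i] y₁))|
        ≤ ∑ i ∈ Finset.range (p₁ n), |g i - f (T^[i] y₁)| := Finset.abs_sum_le_sum_abs _ _
      _ ≤ ∑ _i ∈ Finset.range (p₁ n), (η / 4) := by
          refine Finset.sum_le_sum fun i hi => ?_
          exact hδ _ (hmem₁ i) _ (lt_trans (hsh₁ n i (Finset.mem_range.mp hi)) hεδ)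
      _ = (p₁ n : ℝ) * (η / 4) := by simp [mul_comm]
  have hB₂ : |S₂ - A₂| ≤ (p₂ n : ℝ) * (η / 4) := by
    have hre : S₂ = ∑ i ∈ Finset.range (p₂ n), g (q₁ n + i) := by
      rw [hS₂def, Finset.sum_Ico_eq_sum_range, Nat.add_sub_cancel_left]
    rw [hre, hA₂def, ← Finset.sum_sub_distrib]
    calc |∑ i ∈ Finset.range (p₂ n), (g (q₁ n + i) - f (T^[i] y₂))|
        ≤ ∑ i ∈ Finset.range (p₂ n), |g (q₁ n + i) - f (T^[i] y₂)| :=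
          Finset.abs_sum_le_sum_abs _ _
      _ ≤ ∑ _i ∈ Finset.range (p₂ n), (η / 4) := by
          refine Finset.sum_le_sum fun i hi => ?_
          have hsh := hsh₂ n i (Finset.mem_range.mp hi)
          rw [add_comm (q₁ n) i]
          exact hδ _ (hmem₂ i) _ (lt_trans hsh hεδ)
      _ = (p₂ n : ℝ) * (η / 4) := by simp [mul_comm]
  -- garbage estimates
  have hG₁bd : |G₁| ≤ ((q₁ n : ℝ) - p₁ n) * M := by
    rw [hG₁def]
    calc |∑ i ∈ Finset.Ico (p₁ n) (q₁ n), g i| ≤ ∑ i ∈ Finset.Ico (p₁ n) (q₁ n), |g i| :=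
          Finset.abs_sum_le_sum_abs _ _
      _ ≤ ∑ _i ∈ Finset.Ico (p₁ n) (q₁ n), M := Finset.sum_le_sum fun i _ => hfM _
      _ = ((q₁ n - p₁ n : ℕ) : ℝ) * M := by simp [Nat.card_Ico, mul_comm]
      _ = ((q₁ n : ℝ) - p₁ n) * M := by rw [Nat.cast_sub (hq₁le n)]
  have hG₂bd : |G₂| ≤ ((q₂ n : ℝ) - (q₁ n + p₂ n)) * M := by
    rw [hG₂def]
    calc |∑ i ∈ Finset.Ico (q₁ n + p₂ n) (q₂ n), g i|
        ≤ ∑ i ∈ Finset.Ico (q₁ n + p₂ n) (q₂ n), |g i| := Finset.abs_sum_le_sum_abs _ _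
      _ ≤ ∑ _i ∈ Finset.Ico (q₁ n + p₂ n) (q₂ n), M := Finset.sum_le_sum fun i _ => hfM _
      _ = ((q₂ n - (q₁ n + p₂ n) : ℕ) : ℝ) * M := by simp [Nat.card_Ico, mul_comm]
      _ = ((q₂ n : ℝ) - (q₁ n + p₂ n)) * M := by
          rw [Nat.cast_sub (hp₁p₂q₂ n)]; push_cast; ring
  -- assemble
  rw [Real.dist_eq, hsplit]
  have e0 : (S₁ + G₁ + S₂ + G₂) / (q₂ n : ℝ) - (lam * I₁ + (1 - lam) * I₂)
      = (S₁ / q₂ n - lam * I₁) + G₁ / q₂ n + (S₂ / q₂ n - (1 - lam) * I₂) + G₂ / q₂ n := by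
    field_simp
    ring
  rw [e0]
  have h5 : |S₁ / (q₂ n : ℝ) - ((p₁ n : ℝ) / q₂ n) * I₁| ≤ η / 4 := by
    have he : S₁ / (q₂ n : ℝ) - ((p₁ n : ℝ) / q₂ n) * I₁ = (S₁ - A₁) / q₂ n := by
      rw [hA₁avg]; field_simp
    rw [he, abs_div, abs_of_pos hq₂R, div_le_iff₀ hq₂R]
    calc |S₁ - A₁| ≤ (p₁ n : ℝ) * (η / 4) := hB₁
      _ ≤ (q₂ n : ℝ) * (η / 4) := mul_le_mul_of_nonneg_right hp₁q₂ (by positivity)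
      _ = η / 4 * q₂ n := by ring
  have h6 : |((p₁ n : ℝ) / q₂ n) * I₁ - lam * I₁| ≤ 2 * ε * M := by
    rw [← sub_mul, abs_mul]
    exact mul_le_mul hr₁ hI₁M (abs_nonneg _) (by linarith [hεpos])
  have h7 : |S₂ / (q₂ n : ℝ) - ((p₂ n : ℝ) / q₂ n) * I₂| ≤ η / 4 := by
    have he : S₂ / (q₂ n : ℝ) - ((p₂ n : ℝ) / q₂ n) * I₂ = (S₂ - A₂) / q₂ n := by
      rw [hA₂avg]; field_simp
    rw [he, abs_div, abs_of_pos hq₂R, div_le_iff₀ hq₂R]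
    calc |S₂ - A₂| ≤ (p₂ n : ℝ) * (η / 4) := hB₂
      _ ≤ (q₂ n : ℝ) * (η / 4) := mul_le_mul_of_nonneg_right hp₂q₂ (by positivity)
      _ = η / 4 * q₂ n := by ring
  have h8 : |((p₂ n : ℝ) / q₂ n) * I₂ - (1 - lam) * I₂| ≤ 2 * ε * M := by
    rw [← sub_mul, abs_mul]
    exact mul_le_mul hr₂ hI₂M (abs_nonneg _) (by linarith [hεpos])
  have h9 : |G₁ / (q₂ n : ℝ)| ≤ ε * M := by
    rw [abs_div, abs_of_pos hq₂R, div_le_iff₀ hq₂R]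
    calc |G₁| ≤ ((q₁ n : ℝ) - p₁ n) * M := hG₁bd
      _ ≤ (ε * p₁ n) * M := by
          refine mul_le_mul_of_nonneg_right ?_ hM
          have hring : (1 + ε) * (p₁ n : ℝ) = p₁ n + ε * p₁ n := by ring
          linarith [hq₁ub']
      _ = (ε * M) * p₁ n := by ring
      _ ≤ (ε * M) * q₂ n := mul_le_mul_of_nonneg_left hp₁q₂ (by positivity)
      _ = ε * M * q₂ n := by ring
  have h10 : |G₂ / (q₂ n : ℝ)| ≤ ε * M := by
    rw [abs_div, abs_of_pos hq₂R, div_le_iff₀ hq₂R]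
    calc |G₂| ≤ ((q₂ n : ℝ) - (q₁ n + p₂ n)) * M := hG₂bd
      _ ≤ (ε * p₂ n) * M := by
          refine mul_le_mul_of_nonneg_right ?_ hM
          have hring : (1 + ε) * (p₂ n : ℝ) = p₂ n + ε * p₂ n := by ring
          linarith [hq₂ub']
      _ = (ε * M) * p₂ n := by ring
      _ ≤ (ε * M) * q₂ n := mul_le_mul_of_nonneg_left hp₂q₂ (by positivity)
      _ = ε * M * q₂ n := by ring
  have t₁ : |S₁ / (q₂ n : ℝ) - lam * I₁| ≤ η / 4 + 2 * ε * M := by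
    calc |S₁ / (q₂ n : ℝ) - lam * I₁|
        ≤ |S₁ / (q₂ n : ℝ) - ((p₁ n : ℝ) / q₂ n) * I₁|
          + |((p₁ n : ℝ) / q₂ n) * I₁ - lam * I₁| := abs_sub_le _ _ _
      _ ≤ η / 4 + 2 * ε * M := add_le_add h5 h6
  have t₂ : |S₂ / (q₂ n : ℝ) - (1 - lam) * I₂| ≤ η / 4 + 2 * ε * M := by
    calc |S₂ / (q₂ n : ℝ) - (1 - lam) * I₂|
        ≤ |S₂ / (q₂ n : ℝ) - ((p₂ n : ℝ) / q₂ n) * I₂|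
          + |((p₂ n : ℝ) / q₂ n) * I₂ - (1 - lam) * I₂| := abs_sub_le _ _ _
      _ ≤ η / 4 + 2 * ε * M := add_le_add h7 h8
  have htot : |(S₁ / (q₂ n:ℝ) - lam * I₁) + G₁ / q₂ n + (S₂ / q₂ n - (1 - lam) * I₂)
      + G₂ / q₂ n| ≤ η / 2 + 6 * (ε * M) := by
    calc |(S₁ / (q₂ n:ℝ) - lam * I₁) + G₁ / q₂ n + (S₂ / q₂ n - (1 - lam) * I₂) + G₂ / q₂ n|
        ≤ |(S₁ / (q₂ n:ℝ) - lam * I₁) + G₁ / q₂ n + (S₂ / q₂ n - (1 - lam) * I₂)|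
          + |G₂ / (q₂ n : ℝ)| := abs_add_le _ _
      _ ≤ |(S₁ / (q₂ n:ℝ) - lam * I₁) + G₁ / q₂ n| + |S₂ / (q₂ n:ℝ) - (1 - lam) * I₂|
          + |G₂ / (q₂ n : ℝ)| := by gcongr; exact abs_add_le _ _
      _ ≤ |S₁ / (q₂ n:ℝ) - lam * I₁| + |G₁ / (q₂ n : ℝ)| + |S₂ / (q₂ n:ℝ) - (1 - lam) * I₂|
          + |G₂ / (q₂ n : ℝ)| := by gcongr ?_ + _ + _; exact abs_add_le _ _
      _ ≤ (η / 4 + 2 * ε * M) + ε * M + (η / 4 + 2 * ε * M) + ε * M := by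
          gcongr
      _ = η / 2 + 6 * (ε * M) := by ring
  have hfin : ε * (2 * (6 * M + 1)) < η := by
    rw [lt_div_iff₀ (by positivity)] at hεη
    linarith [hεη]
  have hexp : ε * (2 * (6 * M + 1)) = 12 * (ε * M) + 2 * ε := by ring
  have hεM : 0 ≤ ε * M := by positivity
  linarith [htot, hfin, hexp ▸ hfin]

end Main

theorem stmt11 {X : Type*} [MetricSpace X] [TopologicalSpace.SeparableSpace X]
    [CompleteSpace X] [MeasurableSpace X] [BorelSpace X]
    (hd : ∃ C, ∀ a b : X, dist a b ≤ C)
    (T : X → X) (hT : Continuous T) (K : Set X)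
    (hK : ∀ y ∈ K, ∃ p, 0 < p ∧ T^[p] y = y)
    (hlink : Linkable T K) :
    closure (convexHull ℝ≥0 (ProbabilityMeasure.toFiniteMeasure '' perMeasures T K))
      ⊆ closure (ProbabilityMeasure.toFiniteMeasure '' perMeasures T K) := by
  set S := ProbabilityMeasure.toFiniteMeasure '' perMeasures T K with hS
  have hconv : Convex ℝ≥0 (closure S) := by
    intro x hx y hy a b _ _ hab
    have hmm : ∀ u ∈ S, ∀ v ∈ S,
        (fun u v : FiniteMeasure X => a • u + b • v) u v ∈ closure S := by
      rintro u ⟨μ0, hμ0, rfl⟩ v ⟨ν0, hν0, rfl⟩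
      exact combo_mem_closure T K hlink hμ0 hν0 a b hab
    have hc : Continuous (Function.uncurry fun u v : FiniteMeasure X => a • u + b • v) :=
      combo_continuous a b
    have := map_mem_closure₂ hc hx hy hmm
    rwa [closure_closure] at this
  refine subset_trans (closure_mono (convexHull_min subset_closure hconv)) ?_
  rw [closure_closure]
end

section
/- Let (X,T) be a Polish dynamical system with T uniformly continuous and {D_0,...,D_{k−1}} a periodic decomposition of X. If the set of invariant measures of periodic points of T^k lying in D_0 is dense in the ergodic measures of (X,T^k), then the set of invariant measures of periodic points of T is dense in the ergodic measures of (X,T). -/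
open MeasureTheory Filter Topology
open scoped ENNReal NNReal

section Aux

variable {X : Type*} [MetricSpace X] [MeasurableSpace X] [BorelSpace X]

lemma mapFinsetSum {ι : Type*} (s : Finset ι) (f : X → X) (hf : Measurable f)
    (μ : ι → MeasureTheory.Measure X) :
    MeasureTheory.Measure.map f (∑ i ∈ s, μ i) = ∑ i ∈ s, MeasureTheory.Measure.map f (μ i) := by
  classical
  induction s using Finset.cons_induction with
  | empty => simp
  | cons a s ha ih =>
      rw [Finset.sum_cons, Finset.sum_cons, MeasureTheory.Measure.map_add _ _ hf, ih]

/-- The measure-level average of pushforwards under `T^[0], ..., T^[k-1]`. -/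
noncomputable def avgM (T : X → X) (k : ℕ) (m : MeasureTheory.Measure X) :
    MeasureTheory.Measure X :=
  (k : ℝ≥0∞)⁻¹ • ∑ i ∈ Finset.range k, MeasureTheory.Measure.map T^[i] m

lemma avgM_isProb (T : X → X) (hTm : Measurable T) (k : ℕ) (hk : 0 < k)
    (m : MeasureTheory.Measure X) [MeasureTheory.IsProbabilityMeasure m] :
    MeasureTheory.IsProbabilityMeasure (avgM T k m) := by
  constructor
  have h : ∀ i ∈ Finset.range k, (MeasureTheory.Measure.map T^[i] m) Set.univ = 1 := by
    intro i _
    rw [MeasureTheory.Measure.map_apply (hTm.iterate i) MeasurableSet.univ]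
    simp
  rw [avgM, MeasureTheory.Measure.smul_apply, MeasureTheory.Measure.finset_sum_apply,
    Finset.sum_congr rfl h]
  simp only [Finset.sum_const, Finset.card_range, nsmul_eq_mul, mul_one, smul_eq_mul]
  exact ENNReal.inv_mul_cancel (by exact_mod_cast hk.ne') (by simp)

/-- The probability-measure-level average of pushforwards. -/
noncomputable def avgP (T : X → X) (hTm : Measurable T) (k : ℕ) (hk : 0 < k)
    (m : MeasureTheory.ProbabilityMeasure X) : MeasureTheory.ProbabilityMeasure X :=
  ⟨avgM T k m.toMeasure, avgM_isProb T hTm k hk m.toMeasure⟩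

lemma avgP_integral (T : X → X) (hTc : Continuous T) (k : ℕ) (hk : 0 < k)
    (m : MeasureTheory.ProbabilityMeasure X) (f : BoundedContinuousFunction X ℝ) :
    ∫ x, f x ∂((avgP T hTc.measurable k hk m : MeasureTheory.Measure X)) =
      (k : ℝ)⁻¹ * ∑ i ∈ Finset.range k, ∫ x, f (T^[i] x) ∂(m : MeasureTheory.Measure X) := by
  have hcoe : (avgP T hTc.measurable k hk m : MeasureTheory.Measure X) = avgM T k m := rfl
  rw [hcoe, avgM, MeasureTheory.integral_smul_measure]
  haveI : ∀ i : ℕ, MeasureTheory.IsProbabilityMeasure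
      (MeasureTheory.Measure.map T^[i] (m : MeasureTheory.Measure X)) := fun i =>
    MeasureTheory.Measure.isProbabilityMeasure_map ((hTc.measurable.iterate i)).aemeasurable
  rw [MeasureTheory.integral_finset_sum_measure (fun i _ => f.integrable _)]
  congr 1
  · simp [ENNReal.toReal_inv]
  · refine Finset.sum_congr rfl fun i _ => ?_
    exact MeasureTheory.integral_map ((hTc.measurable.iterate i)).aemeasurable
      f.continuous.aestronglyMeasurable

lemma avgP_continuous [TopologicalSpace.SeparableSpace X] (T : X → X) (hTc : Continuous T)
    (k : ℕ) (hk : 0 < k) :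
    Continuous (avgP T hTc.measurable k hk) := by
  rw [continuous_iff_continuousAt]
  intro m₀
  have : Filter.Tendsto (avgP T hTc.measurable k hk) (nhds m₀)
      (nhds (avgP T hTc.measurable k hk m₀)) := by
    rw [MeasureTheory.ProbabilityMeasure.tendsto_iff_forall_integral_tendsto]
    intro f
    simp only [avgP_integral T hTc k hk]
    apply Filter.Tendsto.const_mul
    apply tendsto_finset_sum
    intro i _
    have hTi : Continuous (T^[i]) := hTc.iterate i
    have := MeasureTheory.ProbabilityMeasure.tendsto_iff_forall_integral_tendsto.mp
      (tendsto_id (x := nhds m₀)) (f.compContinuous ⟨T^[i], hTi⟩)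
    simpa using this
  exact this

end Aux

section Aux2
open MeasureTheory
set_option linter.unusedSectionVars false

variable {X : Type*} [MetricSpace X] [MeasurableSpace X] [BorelSpace X]

lemma doubleSumRange {M : Type*} [AddCommMonoid M] (h : ℕ → M) (k p : ℕ) (hk : 0 < k) :
    ∑ i ∈ Finset.range k, ∑ m ∈ Finset.range p, h (i + k * m)
      = ∑ j ∈ Finset.range (k * p), h j := by
  rw [← Finset.sum_product']
  refine Finset.sum_nbij' (fun pr => pr.1 + k * pr.2) (fun n => (n % k, n / k)) ?_ ?_ ?_ ?_ ?_
  · rintro ⟨i, m⟩ hmem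
    simp only [Finset.mem_product, Finset.mem_range] at hmem
    simp only [Finset.mem_range]
    calc i + k * m < k + k * m := by omega
      _ = k * (m + 1) := by ring
      _ ≤ k * p := Nat.mul_le_mul_left k hmem.2
  · intro n hn
    simp only [Finset.mem_range] at hn
    simp only [Finset.mem_product, Finset.mem_range]
    constructor
    · exact Nat.mod_lt _ hk
    · exact Nat.div_lt_of_lt_mul hn
  · rintro ⟨i, m⟩ hmem
    simp only [Finset.mem_product, Finset.mem_range] at hmem
    have h1 : (i + k * m) % k = i := by
      rw [Nat.add_mul_mod_self_left, Nat.mod_eq_of_lt hmem.1]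
    have h2 : (i + k * m) / k = m := by
      rw [Nat.add_mul_div_left _ _ hk, Nat.div_eq_of_lt hmem.1, zero_add]
    simp [h1, h2]
  · intro n _
    exact Nat.mod_add_div n k
  · rintro ⟨i, m⟩ _
    rfl

lemma avgP_periodicOrbit (T : X → X) (hTc : Continuous T) (k : ℕ) (hk : 0 < k)
    (x : X) (p : ℕ) (hp : 0 < p) :
    avgP T hTc.measurable k hk (periodicOrbitMeasure (T^[k]) x p)
      = periodicOrbitMeasure T x (k * p) := by
  apply Subtype.ext
  have hkp : 0 < k * p := Nat.mul_pos hk hp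
  show avgM T k (((max p 1 : ℕ) : ℝ≥0∞)⁻¹ • ∑ m ∈ Finset.range (max p 1),
          Measure.dirac ((T^[k])^[m] x))
      = ((max (k * p) 1 : ℕ) : ℝ≥0∞)⁻¹ • ∑ j ∈ Finset.range (max (k * p) 1),
          Measure.dirac (T^[j] x)
  rw [Nat.max_eq_left hp, Nat.max_eq_left hkp, avgM]
  have hmap : ∀ i ∈ Finset.range k,
      Measure.map T^[i] (((p : ℕ) : ℝ≥0∞)⁻¹ • ∑ m ∈ Finset.range p,
        Measure.dirac ((T^[k])^[m] x))
      = ((p : ℕ) : ℝ≥0∞)⁻¹ • ∑ m ∈ Finset.range p, Measure.dirac (T^[i + k * m] x) := by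
    intro i _
    rw [Measure.map_smul, mapFinsetSum _ _ (hTc.measurable.iterate i)]
    congr 1
    refine Finset.sum_congr rfl fun m _ => ?_
    rw [Measure.map_dirac' (hTc.measurable.iterate i)]
    congr 1
    rw [← Function.iterate_mul, ← Function.iterate_add_apply]
  rw [Finset.sum_congr rfl hmap, ← Finset.smul_sum, smul_smul]
  have hsum : ∑ i ∈ Finset.range k, ∑ m ∈ Finset.range p, Measure.dirac (T^[i + k * m] x)
      = ∑ j ∈ Finset.range (k * p), Measure.dirac (T^[j] x) :=
    doubleSumRange (fun j => Measure.dirac (T^[j] x)) k p hk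
  rw [hsum]
  congr 1
  rw [Nat.cast_mul, ENNReal.mul_inv (Or.inl (by exact_mod_cast hk.ne')) (Or.inl (by simp))]

end Aux2


theorem stmt12 {X : Type*} [MetricSpace X] [TopologicalSpace.SeparableSpace X]
    [CompleteSpace X] [MeasurableSpace X] [BorelSpace X]
    (hd : ∃ C, ∀ a b : X, dist a b ≤ C)
    (T : X → X) (hT : UniformContinuous T) (k : ℕ) (hk : 0 < k)
    (D : ℕ → Set X) (hDclosed : ∀ i < k, IsClosed (D i))
    (hDcover : (⋃ i ∈ Set.Iio k, D i) = Set.univ)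
    (hDmap : ∀ i < k, T '' D i ⊆ D ((i + 1) % k))
    (hdense : {μ : ProbabilityMeasure X | Ergodic (T^[k]) μ.toMeasure}
      ⊆ closure (perMeasures (T^[k]) (D 0))) :
    {μ : ProbabilityMeasure X | Ergodic T μ.toMeasure}
      ⊆ closure (perMeasures T Set.univ) := by
  classical
  intro μ hμ
  simp only [Set.mem_setOf_eq] at hμ
  have hTc : Continuous T := hT.continuous
  have hTm : Measurable T := hTc.measurable
  have hmpi : ∀ i : ℕ, MeasurePreserving T^[i] μ.toMeasure μ.toMeasure :=
    fun i => hμ.toMeasurePreserving.iterate i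
  haveI : IsProbabilityMeasure μ.toMeasure := μ.2
  -- Step 1: every invariant set of `T^[k]` of positive measure has measure at least `1/k`.
  have F1 : ∀ B : Set X, MeasurableSet B → T^[k] ⁻¹' B = B → μ.toMeasure B ≠ 0 →
      (k : ℝ≥0∞)⁻¹ ≤ μ.toMeasure B := by
    intro B hBm hBinv hB0
    set U : Set X := ⋃ i ∈ Finset.range k, T^[i] ⁻¹' B with hU
    have hUm : MeasurableSet U :=
      Finset.measurableSet_biUnion _ (fun i _ => (hTm.iterate i) hBm)
    have hUinv : T ⁻¹' U = U := by
      ext y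
      simp only [hU, Set.mem_preimage, Set.mem_iUnion, Finset.mem_range, exists_prop]
      constructor
      · rintro ⟨i, hi, hx⟩
        rw [← Function.iterate_succ_apply] at hx
        rcases Nat.lt_or_ge (i + 1) k with h | h
        · exact ⟨i + 1, h, hx⟩
        · have hik : i + 1 = k := by omega
          simp only [Nat.succ_eq_add_one] at hx
          rw [hik] at hx
          have hyB : y ∈ T^[k] ⁻¹' B := hx
          rw [hBinv] at hyB
          exact ⟨0, hk, by simpa using hyB⟩
      · rintro ⟨i, hi, hx⟩
        cases i with
        | zero =>
            have hyB : y ∈ B := by simpa using hx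
            have hky : T^[k] y ∈ B := by
              rw [← hBinv] at hyB; exact hyB
            refine ⟨k - 1, by omega, ?_⟩
            have hrw : T^[k - 1] (T y) = T^[k] y := by
              rw [← Function.iterate_succ_apply]
              congr 1
              omega
            rw [hrw]; exact hky
        | succ j =>
            exact ⟨j, by omega, by rwa [Function.iterate_succ_apply] at hx⟩
    have hUprob : μ.toMeasure U = 1 := by
      rcases hμ.toPreErgodic.prob_eq_zero_or_one hUm hUinv with h | h
      · exfalso
        apply hB0
        have hBU : B ⊆ U := by
          intro y hy
          simp only [hU, Set.mem_iUnion, Finset.mem_range, exists_prop]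
          exact ⟨0, hk, by simpa using hy⟩
        exact measure_mono_null hBU h
      · exact h
    have hle : (1 : ℝ≥0∞) ≤ k * μ.toMeasure B := by
      calc (1 : ℝ≥0∞) = μ.toMeasure U := hUprob.symm
        _ ≤ ∑ i ∈ Finset.range k, μ.toMeasure (T^[i] ⁻¹' B) := measure_biUnion_finset_le _ _
        _ = ∑ i ∈ Finset.range k, μ.toMeasure B := Finset.sum_congr rfl fun i _ =>
            (hmpi i).measure_preimage hBm.nullMeasurableSet
        _ = k * μ.toMeasure B := by
            simp [Finset.sum_const, Finset.card_range, nsmul_eq_mul]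
    calc (k : ℝ≥0∞)⁻¹ = (k : ℝ≥0∞)⁻¹ * 1 := (mul_one _).symm
      _ ≤ (k : ℝ≥0∞)⁻¹ * (k * μ.toMeasure B) := mul_le_mul_right hle _
      _ = μ.toMeasure B := by
          rw [← mul_assoc, ENNReal.inv_mul_cancel (by exact_mod_cast hk.ne') (by simp), one_mul]
  -- Step 2: find an "atom" `A` of the invariant σ-algebra of `T^[k]`.
  set Inv : Set ℝ≥0∞ := {r | ∃ B : Set X, MeasurableSet B ∧ T^[k] ⁻¹' B = B ∧
    μ.toMeasure B ≠ 0 ∧ r = μ.toMeasure B} with hInv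
  set c : ℝ≥0∞ := sInf Inv with hc
  have hcge : (k : ℝ≥0∞)⁻¹ ≤ c :=
    le_sInf (by rintro r ⟨B, hBm, hBinv, hB0, rfl⟩; exact F1 B hBm hBinv hB0)
  have hcle : c ≤ 1 :=
    sInf_le ⟨Set.univ, MeasurableSet.univ, by simp, by simp, by simp⟩
  have hc0 : c ≠ 0 := by
    have h1 : (0 : ℝ≥0∞) < (k : ℝ≥0∞)⁻¹ := ENNReal.inv_pos.mpr (by simp)
    exact (lt_of_lt_of_le h1 hcge).ne'
  have hctop : c ≠ ⊤ := (lt_of_le_of_lt hcle (by simp)).ne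
  have hclt : c < c + c := ENNReal.lt_add_right hctop hc0
  obtain ⟨r, hrInv, hrlt⟩ : ∃ r ∈ Inv, r < c + c := sInf_lt_iff.mp hclt
  obtain ⟨A, hAm, hAinv, hA0, rfl⟩ := hrInv
  have hAtom : ∀ B : Set X, MeasurableSet B → T^[k] ⁻¹' B = B →
      μ.toMeasure (A ∩ B) = 0 ∨ μ.toMeasure (A \ B) = 0 := by
    intro B hBm hBinv
    by_contra hcon
    push_neg at hcon
    obtain ⟨h1, h2⟩ := hcon
    have hc1 : c ≤ μ.toMeasure (A ∩ B) := sInf_le ⟨A ∩ B, hAm.inter hBm,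
      by rw [Set.preimage_inter, hAinv, hBinv], h1, rfl⟩
    have hc2 : c ≤ μ.toMeasure (A \ B) := sInf_le ⟨A \ B, hAm.diff hBm,
      by rw [Set.preimage_diff, hAinv, hBinv], h2, rfl⟩
    have hsum : μ.toMeasure (A ∩ B) + μ.toMeasure (A \ B) = μ.toMeasure A :=
      measure_inter_add_diff A hBm
    have hge : c + c ≤ μ.toMeasure A := hsum ▸ add_le_add hc1 hc2
    exact absurd hrlt (not_lt.mpr hge)
  -- Step 3: the ergodic component `ν` of `μ` with respect to `T^[k]`.
  set ν : Measure X := (μ.toMeasure A)⁻¹ • μ.toMeasure.restrict A with hν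
  have hνapp : ∀ B : Set X, MeasurableSet B →
      ν B = (μ.toMeasure A)⁻¹ * μ.toMeasure (B ∩ A) := by
    intro B hBm
    rw [hν, Measure.smul_apply, Measure.restrict_apply hBm, smul_eq_mul]
  have hνprob : IsProbabilityMeasure ν := by
    constructor
    rw [hνapp Set.univ MeasurableSet.univ, Set.univ_inter]
    exact ENNReal.inv_mul_cancel hA0 (measure_ne_top _ _)
  have hνmp : MeasurePreserving (T^[k]) ν ν := by
    refine ⟨hTm.iterate k, ?_⟩
    ext B hBm
    rw [Measure.map_apply (hTm.iterate k) hBm, hνapp _ ((hTm.iterate k) hBm), hνapp B hBm]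
    congr 1
    have h1 : T^[k] ⁻¹' B ∩ A = T^[k] ⁻¹' (B ∩ A) := by
      rw [Set.preimage_inter, hAinv]
    rw [h1]
    exact (hmpi k).measure_preimage (hBm.inter hAm).nullMeasurableSet
  have hνpe : PreErgodic (T^[k]) ν := by
    constructor
    intro B hBm hBinv
    rw [Filter.eventuallyConst_set']
    rcases hAtom B hBm hBinv with h | h
    · left
      rw [MeasureTheory.ae_eq_empty, hνapp B hBm, Set.inter_comm, h, mul_zero]
    · right
      rw [MeasureTheory.ae_eq_univ, hνapp Bᶜ hBm.compl]
      have h2 : Bᶜ ∩ A = A \ B := by rw [Set.inter_comm, Set.diff_eq]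
      rw [h2, h, mul_zero]
  have hνerg : Ergodic (T^[k]) ν := ⟨hνmp, hνpe⟩
  set νP : ProbabilityMeasure X := ⟨ν, hνprob⟩ with hνP
  have hmem : νP ∈ closure (perMeasures (T^[k]) (D 0)) :=
    hdense (show Ergodic (T^[k]) νP.toMeasure from hνerg)
  -- Step 4: the averaged pushforward of `ν` is `μ`.
  set Aj : ℕ → Set X := fun j => T^[j] ⁻¹' A with hAj
  have hAjm : ∀ j, MeasurableSet (Aj j) := fun j => (hTm.iterate j) hAm
  have hAjk : Aj k = Aj 0 := by
    simp only [hAj]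
    rw [hAinv]
    simp
  set N : X → ℕ := fun y => ∑ j ∈ Finset.range k, if y ∈ Aj j then 1 else 0 with hN
  have hNmeas : Measurable N := by
    apply Finset.measurable_sum
    intro j _
    exact Measurable.ite (hAjm j) measurable_const measurable_const
  have hNT : ∀ y, N (T y) = N y := by
    intro y
    have hterm : ∀ j, (T y ∈ Aj j) ↔ (y ∈ Aj (j + 1)) := by
      intro j
      simp only [hAj, Set.mem_preimage]
      rw [Function.iterate_succ_apply]
    have e1 : N (T y) = ∑ j ∈ Finset.range k, if y ∈ Aj (j + 1) then 1 else 0 := by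
      simp only [hN]
      exact Finset.sum_congr rfl fun j _ => by rw [if_congr (hterm j) rfl rfl]
    have e2 := Finset.sum_range_succ' (fun j => if y ∈ Aj j then 1 else 0) k
    have e3 := Finset.sum_range_succ (fun j => if y ∈ Aj j then 1 else 0) k
    rw [e3] at e2
    -- e2 : ∑_{j<k} f j + f k = ∑_{j<k} f (j+1) + f 0
    rw [hAjk] at e2
    rw [e1]
    show (∑ j ∈ Finset.range k, if y ∈ Aj (j + 1) then 1 else 0) = N y
    simp only [hN]
    omega
  have hinv2 : ∀ j : ℕ, T ⁻¹' {y | j ≤ N y} = {y | j ≤ N y} := by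
    intro j; ext y
    simp only [Set.mem_preimage, Set.mem_setOf_eq, hNT]
  have hmeas2 : ∀ j : ℕ, MeasurableSet {y | j ≤ N y} := by
    intro j
    exact hNmeas measurableSet_Ici
  have hdich : ∀ j : ℕ, μ.toMeasure {y | j ≤ N y} = 0 ∨ μ.toMeasure {y | j ≤ N y} = 1 :=
    fun j => hμ.toPreErgodic.prob_eq_zero_or_one (hmeas2 j) (hinv2 j)
  have hNle : ∀ y, N y ≤ k := by
    intro y
    calc N y ≤ ∑ _j ∈ Finset.range k, 1 :=
        Finset.sum_le_sum (fun j _ => by split <;> omega)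
      _ = k := by simp
  have hex : ∃ j, ¬ μ.toMeasure {y | j ≤ N y} = 1 := by
    refine ⟨k + 1, ?_⟩
    have hempty : {y | k + 1 ≤ N y} = (∅ : Set X) := by
      ext y
      simp only [Set.mem_setOf_eq, Set.mem_empty_iff_false, iff_false, not_le]
      exact Nat.lt_succ_of_le (hNle y)
    rw [hempty]
    simp
  set j₁ := Nat.find hex with hj₁
  have hj₁spec : ¬ μ.toMeasure {y | j₁ ≤ N y} = 1 := Nat.find_spec hex
  have hj₁pos : 0 < j₁ := by
    rcases Nat.eq_zero_or_pos j₁ with h | h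
    · exfalso
      apply hj₁spec
      rw [h]
      have huniv : {y | 0 ≤ N y} = Set.univ := by ext y; simp
      rw [huniv]
      simp
    · exact h
  set j₀ := j₁ - 1 with hj₀
  have hPj₀ : μ.toMeasure {y | j₀ ≤ N y} = 1 :=
    not_not.mp (Nat.find_min hex (show j₀ < j₁ by omega))
  have hPj₁ : μ.toMeasure {y | j₀ + 1 ≤ N y} = 0 := by
    have hj : j₀ + 1 = j₁ := by omega
    rw [hj]
    rcases hdich j₁ with h | h
    · exact h
    · exact absurd h hj₁spec
  have hae : ∀ᵐ y ∂μ.toMeasure, N y = j₀ := by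
    rw [MeasureTheory.ae_iff]
    have hsub : {y | ¬ N y = j₀} ⊆ {y | j₀ ≤ N y}ᶜ ∪ {y | j₀ + 1 ≤ N y} := by
      intro y hy
      simp only [Set.mem_setOf_eq] at hy
      rcases Nat.lt_or_ge (N y) j₀ with h | h
      · left; simp only [Set.mem_compl_iff, Set.mem_setOf_eq]; omega
      · right; simp only [Set.mem_setOf_eq]; omega
    refine measure_mono_null hsub (measure_union_null ?_ hPj₁)
    rw [prob_compl_eq_zero_iff (hmeas2 j₀)]
    exact hPj₀
  have claim3 : ∀ B : Set X, MeasurableSet B →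
      ∑ j ∈ Finset.range k, μ.toMeasure (B ∩ Aj j) = (j₀ : ℝ≥0∞) * μ.toMeasure B := by
    intro B hBm
    have e1 : ∀ j ∈ Finset.range k, μ.toMeasure (B ∩ Aj j)
        = ∫⁻ y in B, (Aj j).indicator (1 : X → ℝ≥0∞) y ∂μ.toMeasure := by
      intro j _
      rw [MeasureTheory.lintegral_indicator_one (hAjm j), Measure.restrict_apply (hAjm j),
        Set.inter_comm]
    rw [Finset.sum_congr rfl e1,
      ← MeasureTheory.lintegral_finset_sum _ (fun j _ => measurable_one.indicator (hAjm j))]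
    calc ∫⁻ y in B, ∑ j ∈ Finset.range k, (Aj j).indicator (1 : X → ℝ≥0∞) y ∂μ.toMeasure
        = ∫⁻ _y in B, ((j₀ : ℕ) : ℝ≥0∞) ∂μ.toMeasure := by
          refine lintegral_congr_ae ?_
          refine MeasureTheory.ae_restrict_of_ae ?_
          filter_upwards [hae] with y hy
          have e2 : (∑ j ∈ Finset.range k, (Aj j).indicator (1 : X → ℝ≥0∞) y)
              = ((N y : ℕ) : ℝ≥0∞) := by
            simp only [hN, Nat.cast_sum, Set.indicator_apply, Pi.one_apply, Nat.cast_ite,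
              Nat.cast_one, Nat.cast_zero]
          rw [e2, hy]
      _ = (j₀ : ℝ≥0∞) * μ.toMeasure B := setLIntegral_const B _
  set ρ : Measure X := (avgP T hTc.measurable k hk νP : Measure X) with hρ
  have hρap : ∀ B : Set X, MeasurableSet B →
      ρ B = (k : ℝ≥0∞)⁻¹ * ((μ.toMeasure A)⁻¹ * ((j₀ : ℝ≥0∞) * μ.toMeasure B)) := by
    intro B hBm
    have hstep : ∀ i ∈ Finset.range k,
        (Measure.map T^[i] ν) B = (μ.toMeasure A)⁻¹ * μ.toMeasure (B ∩ Aj (k - i)) := by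
      intro i hi
      rw [Finset.mem_range] at hi
      rw [Measure.map_apply (hTm.iterate i) hBm, hνapp _ ((hTm.iterate i) hBm)]
      congr 1
      have h1 : T^[i] ⁻¹' B ∩ A = T^[i] ⁻¹' (B ∩ Aj (k - i)) := by
        rw [Set.preimage_inter]
        congr 1
        simp only [hAj]
        rw [← Set.preimage_comp, ← Function.iterate_add, Nat.sub_add_cancel hi.le]
        exact hAinv.symm
      rw [h1]
      exact (hmpi i).measure_preimage (hBm.inter (hAjm _)).nullMeasurableSet
    have hsplit : ρ B = (k : ℝ≥0∞)⁻¹ * ∑ i ∈ Finset.range k, (Measure.map T^[i] ν) B := by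
      rw [hρ]
      show (avgM T k ν) B = _
      rw [avgM, Measure.smul_apply, Measure.finset_sum_apply, smul_eq_mul]
    rw [hsplit, Finset.sum_congr rfl hstep, ← Finset.mul_sum]
    congr 1
    congr 1
    have hrefl : ∑ i ∈ Finset.range k, μ.toMeasure (B ∩ Aj (k - i))
        = ∑ i ∈ Finset.range k, μ.toMeasure (B ∩ Aj (i + 1)) := by
      rw [← Finset.sum_range_reflect (fun i => μ.toMeasure (B ∩ Aj (i + 1))) k]
      refine Finset.sum_congr rfl fun i hi => ?_
      rw [Finset.mem_range] at hi
      have hidx : k - i = k - 1 - i + 1 := by omega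
      rw [hidx]
    rw [hrefl]
    have hshift : ∑ i ∈ Finset.range k, μ.toMeasure (B ∩ Aj (i + 1))
        = ∑ i ∈ Finset.range k, μ.toMeasure (B ∩ Aj i) := by
      have h1 := Finset.sum_range_succ' (fun i => μ.toMeasure (B ∩ Aj i)) k
      have h2 := Finset.sum_range_succ (fun i => μ.toMeasure (B ∩ Aj i)) k
      rw [h1] at h2
      rw [hAjk] at h2
      exact WithTop.add_right_cancel (measure_ne_top _ _) h2
    rw [hshift, claim3 B hBm]
  haveI hρprob : IsProbabilityMeasure ρ := (avgP T hTc.measurable k hk νP).2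
  have hconst : (k : ℝ≥0∞)⁻¹ * ((μ.toMeasure A)⁻¹ * ((j₀ : ℝ≥0∞) * 1)) = 1 := by
    have h1 := hρap Set.univ MeasurableSet.univ
    rw [measure_univ, measure_univ] at h1
    exact h1.symm
  have hΦν : avgP T hTc.measurable k hk νP = μ := by
    apply Subtype.ext
    apply Measure.ext
    intro B hBm
    show ρ B = μ.toMeasure B
    calc ρ B = (k : ℝ≥0∞)⁻¹ * ((μ.toMeasure A)⁻¹ * ((j₀ : ℝ≥0∞) * μ.toMeasure B)) := hρap B hBm
      _ = ((k : ℝ≥0∞)⁻¹ * ((μ.toMeasure A)⁻¹ * ((j₀ : ℝ≥0∞) * 1))) * μ.toMeasure B := by ring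
      _ = μ.toMeasure B := by rw [hconst, one_mul]
  -- Step 5: conclude.
  have h1 : avgP T hTc.measurable k hk νP ∈
      closure (avgP T hTc.measurable k hk '' perMeasures (T^[k]) (D 0)) :=
    image_closure_subset_closure_image (avgP_continuous T hTc k hk)
      (Set.mem_image_of_mem _ hmem)
  have h2 : avgP T hTc.measurable k hk '' perMeasures (T^[k]) (D 0)
      ⊆ perMeasures T Set.univ := by
    rintro _ ⟨m, hm, rfl⟩
    obtain ⟨x, hx, p, hp, hper, rfl⟩ := hm
    refine ⟨x, trivial, k * p, Nat.mul_pos hk hp, ?_, ?_⟩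
    · rw [Function.iterate_mul]; exact hper
    · exact avgP_periodicOrbit T hTc k hk x p hp
  rw [hΦν] at h1
  exact closure_mono h2 h1
end
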